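/- Let A(s) be the unique formal power series (in x, with coefficients polynomial in s and q) satisfying A(s) = 1 + x·A(1) + xsq·A(s) + (xsq/(1-sq))·(A(1) - A(sq)). Then A(1) = (1/(1-xq))·J(xq)/J(x), where J(x) = Σ_{n≥0} (-x)^n q^{n(n-1)/2} / ((q;q)_n (xq;q)_n). -/

import Mathlib

open PowerSeries

noncomputable section
namespace FC

/-- The field `ℚ(q)` of rational functions in `q`. -/
abbrev K : Type := RatFunc ℚ

/-- The variable `q`. -/
def q : K := RatFunc.X

/-- The field `ℚ(q)(s)` of rational functions in `s` over `ℚ(q)`. -/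
abbrev S : Type := RatFunc K

/-- The variable `s`. -/
def sS : S := RatFunc.X

/-- `q` as an element of `ℚ(q)(s)`. -/
def qS : S := RatFunc.C q

/-- A power series in `x` over `ℚ(q)(s)` has coefficients polynomial in `s`
(and hence in `s` and `q`, up to denominators in `q` alone). -/
def PolyCoeffs (A : PowerSeries S) : Prop :=
  ∀ n, (PowerSeries.coeff (R := S) n A).denom = 1

/-- Evaluation of a rational function of `s` at `s = 1`. -/
def ev1 (f : S) : K := RatFunc.eval (RingHom.id K) 1 f

/-- `A(1)`: evaluate each coefficient at `s = 1`, giving a power series in `x` over `ℚ(q)`. -/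
def atOneK (A : PowerSeries S) : PowerSeries K :=
  PowerSeries.mk fun n => ev1 (PowerSeries.coeff (R := S) n A)

/-- `A(1)`, lifted back to a power series over `ℚ(q)(s)`. -/
def atOne (A : PowerSeries S) : PowerSeries S :=
  PowerSeries.mk fun n => RatFunc.C (ev1 (PowerSeries.coeff (R := S) n A))

/-- Substitution `s ↦ s·q^j` in each coefficient. -/
def atSq (j : ℕ) (A : PowerSeries S) : PowerSeries S :=
  PowerSeries.mk fun n =>
    RatFunc.eval (RatFunc.C : K →+* S) (RatFunc.C (q ^ j) * RatFunc.X)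
      (PowerSeries.coeff (R := S) n A)

/-- The q-Pochhammer symbol `(a; q)_n = ∏_{i=0}^{n-1} (1 - a q^i)` in `ℚ(q)`. -/
def poch (a : K) (n : ℕ) : K := ∏ i ∈ Finset.range n, (1 - a * q ^ i)

/-- The power series `(x q^t; q)_n = ∏_{i=0}^{n-1} (1 - q^{t+i} x)` in the variable `x`. -/
def pochX (t n : ℕ) : PowerSeries K :=
  ∏ i ∈ Finset.range n, (1 - PowerSeries.C (R := K) (q ^ (t + i)) * PowerSeries.X)

/-- `J(x) = Σ_{n≥0} (-x)^n q^{C(n,2)} / ((q;q)_n (xq;q)_n)`. -/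
def J : PowerSeries K :=
  PowerSeries.mk fun N => ∑ n ∈ Finset.range (N + 1),
    ((-1 : K) ^ n * q ^ n.choose 2 / poch q n) * PowerSeries.coeff (R := K) (N - n) (pochX 1 n)⁻¹

-- ## Part A : facts about K

lemma q_ne_zero : q ≠ 0 := RatFunc.X_ne_zero

lemma q_pow_ne_one (j : ℕ) : q ^ (j + 1) ≠ 1 := by
  intro h
  have h2 : algebraMap (Polynomial ℚ) K (Polynomial.X ^ (j+1)) = algebraMap (Polynomial ℚ) K 1 := by
    simpa [q, RatFunc.algebraMap_X] using h
  have h3 : (Polynomial.X : Polynomial ℚ) ^ (j+1) = 1 := RatFunc.algebraMap_injective ℚ h2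
  have h4 := congrArg (Polynomial.eval 0) h3
  simp at h4

lemma one_sub_q_pow_ne (j : ℕ) : (1 : K) - q ^ (j + 1) ≠ 0 := by
  intro h
  exact q_pow_ne_one j (by linear_combination -h)

lemma poch_zero (a : K) : poch a 0 = 1 := by simp [poch]

lemma poch_succ_front (k m : ℕ) :
    poch (q ^ (k + 1)) (m + 1) = (1 - q ^ (k + 1)) * poch (q ^ (k + 2)) m := by
  rw [poch, Finset.prod_range_succ', poch, mul_comm]
  congr 1
  · simp
  · apply Finset.prod_congr rfl
    intro i _
    congr 1
    ring

lemma poch_ne_zero (k m : ℕ) : poch (q ^ (k + 1)) m ≠ 0 := by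
  rw [poch]
  apply Finset.prod_ne_zero_iff.mpr
  intro i _
  have : (1 : K) - q ^ (k + 1) * q ^ i = 1 - q ^ (k + i + 1) := by ring
  rw [this]
  exact one_sub_q_pow_ne (k + i)

-- ## Part A' : facts about pochX

lemma pochX_zero (t : ℕ) : pochX t 0 = 1 := by simp [pochX]

lemma pochX_one (t : ℕ) : pochX t 1 = 1 - PowerSeries.C (R := K) (q ^ t) * PowerSeries.X := by
  simp [pochX]

lemma pochX_succ_front (t n : ℕ) :
    pochX t (n + 1) = (1 - PowerSeries.C (R := K) (q ^ t) * PowerSeries.X) * pochX (t + 1) n := by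
  rw [pochX, Finset.prod_range_succ', pochX, mul_comm]
  congr 1
  apply Finset.prod_congr rfl
  intro i _
  rw [show t + (i + 1) = t + 1 + i from by omega]

lemma constantCoeff_pochX (t n : ℕ) : constantCoeff (R := K) (pochX t n) = 1 := by
  rw [pochX, map_prod]
  apply Finset.prod_eq_one
  intro i _
  simp

lemma pochX_inv_mul (t n : ℕ) : pochX t n * (pochX t n)⁻¹ = 1 :=
  PowerSeries.mul_inv_cancel _ (by rw [constantCoeff_pochX]; exact one_ne_zero)

lemma one_sub_qX_mul_inv (t : ℕ) :
    (1 - PowerSeries.C (R := K) (q ^ t) * PowerSeries.X) *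
      (1 - PowerSeries.C (R := K) (q ^ t) * PowerSeries.X)⁻¹ = 1 := by
  apply PowerSeries.mul_inv_cancel
  simp

-- ## Part B : sums of families of power series with increasing order

/-- Formal sum of a family of power series, where the `m`-th member is assumed to have
order at least `m`. -/
def SumF (F : ℕ → PowerSeries K) : PowerSeries K :=
  PowerSeries.mk fun N => ∑ m ∈ Finset.range (N + 1), PowerSeries.coeff (R := K) N (F m)

/-- The `m`-th member has order at least `m`. -/
def LowZero (F : ℕ → PowerSeries K) : Prop :=
  ∀ m N : ℕ, N < m → PowerSeries.coeff (R := K) N (F m) = 0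

lemma coeff_SumF (F : ℕ → PowerSeries K) (N : ℕ) :
    PowerSeries.coeff (R := K) N (SumF F) = ∑ m ∈ Finset.range (N + 1), PowerSeries.coeff (R := K) N (F m) := by
  simp [SumF]

lemma SumF_congr {F G : ℕ → PowerSeries K} (h : ∀ m, F m = G m) : SumF F = SumF G := by
  ext N
  rw [coeff_SumF, coeff_SumF]
  exact Finset.sum_congr rfl fun m _ => by rw [h m]

lemma SumF_zero : SumF (fun _ => 0) = 0 := by
  ext N
  simp [coeff_SumF]

lemma SumF_add (F G : ℕ → PowerSeries K) : SumF (fun m => F m + G m) = SumF F + SumF G := by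
  ext N
  simp [coeff_SumF, Finset.sum_add_distrib]

lemma SumF_shift (F : ℕ → PowerSeries K) (hF : LowZero F) :
    SumF F = F 0 + SumF (fun m => F (m + 1)) := by
  ext N
  rw [map_add, coeff_SumF, coeff_SumF,
    Finset.sum_range_succ' (fun m => PowerSeries.coeff (R := K) N (F m)) N,
    Finset.sum_range_succ (fun m => PowerSeries.coeff (R := K) N (F (m + 1))) N,
    hF (N + 1) N (by omega), add_zero, add_comm]

lemma SumF_mul_left (P : PowerSeries K) (F : ℕ → PowerSeries K) (hF : LowZero F) :
    P * SumF F = SumF (fun m => P * F m) := by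
  ext N
  rw [coeff_SumF, PowerSeries.coeff_mul]
  calc ∑ p ∈ Finset.HasAntidiagonal.antidiagonal N, PowerSeries.coeff (R := K) p.1 P * PowerSeries.coeff (R := K) p.2 (SumF F)
      = ∑ p ∈ Finset.HasAntidiagonal.antidiagonal N, ∑ m ∈ Finset.range (N + 1),
          PowerSeries.coeff (R := K) p.1 P * PowerSeries.coeff (R := K) p.2 (F m) := by
        apply Finset.sum_congr rfl
        intro p hp
        have hp2 : p.2 ≤ N := Finset.HasAntidiagonal.antidiagonal.snd_le hp
        have hc : PowerSeries.coeff (R := K) p.2 (SumF F)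
            = ∑ m ∈ Finset.range (N + 1), PowerSeries.coeff (R := K) p.2 (F m) := by
          rw [coeff_SumF]
          apply Finset.sum_subset
          · intro m hm
            simp only [Finset.mem_range] at hm ⊢
            omega
          · intro m _ hm
            simp only [Finset.mem_range] at hm
            exact hF m p.2 (by omega)
        rw [hc, Finset.mul_sum]
    _ = ∑ m ∈ Finset.range (N + 1), ∑ p ∈ Finset.HasAntidiagonal.antidiagonal N,
          PowerSeries.coeff (R := K) p.1 P * PowerSeries.coeff (R := K) p.2 (F m) := Finset.sum_comm
    _ = ∑ m ∈ Finset.range (N + 1), PowerSeries.coeff (R := K) N (P * F m) := by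
        apply Finset.sum_congr rfl
        intro m _
        rw [PowerSeries.coeff_mul]

lemma SumF_rescale (c : K) (F : ℕ → PowerSeries K) :
    rescale c (SumF F) = SumF (fun m => rescale c (F m)) := by
  ext N
  rw [PowerSeries.coeff_rescale, coeff_SumF, coeff_SumF, Finset.mul_sum]
  exact Finset.sum_congr rfl fun m _ => by rw [PowerSeries.coeff_rescale]

-- ## Part C : the q-series families

lemma choose_two_succ (m : ℕ) : (m + 1).choose 2 = m.choose 2 + m := by
  have h := Nat.choose_succ_succ m 1
  simp only [Nat.choose_one_right, Nat.succ_eq_add_one, Nat.reduceAdd] at h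
  omega

lemma ps_inv_one : (1 : PowerSeries K)⁻¹ = 1 :=
  ((PowerSeries.eq_inv_iff_mul_eq_one (by simp)).mpr (by simp)).symm

lemma rescale_C' (a r : K) : rescale a (PowerSeries.C (R := K) r) = PowerSeries.C (R := K) r := by
  ext n
  rw [PowerSeries.coeff_rescale]
  rcases n with _ | n
  · simp
  · simp [PowerSeries.coeff_C]

lemma rescale_inv (a : K) (φ : PowerSeries K) (h : constantCoeff (R := K) φ ≠ 0) :
    rescale a φ⁻¹ = (rescale a φ)⁻¹ := by
  have h2 : constantCoeff (R := K) (rescale a φ) ≠ 0 := by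
    have : constantCoeff (R := K) (rescale a φ) = constantCoeff (R := K) φ := by
      rw [← PowerSeries.coeff_zero_eq_constantCoeff, PowerSeries.coeff_rescale]
      simp
    rwa [this]
  rw [PowerSeries.eq_inv_iff_mul_eq_one h2, ← map_mul, PowerSeries.inv_mul_cancel φ h, map_one]

lemma rescale_pochX (t n : ℕ) : rescale q (pochX t n) = pochX (t + 1) n := by
  rw [pochX, pochX, map_prod]
  apply Finset.prod_congr rfl
  intro i _
  have h : rescale q (1 - PowerSeries.C (R := K) (q ^ (t + i)) * PowerSeries.X)
      = 1 - PowerSeries.C (R := K) (q ^ (t + i)) * (PowerSeries.C (R := K) q * PowerSeries.X) := by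
    rw [map_sub, map_one, map_mul, rescale_C', rescale_X]
  rw [h, show t + 1 + i = t + i + 1 from by omega, pow_succ, map_mul, mul_assoc]

/-- the summand of `J_k(x)` -/
def tT (k m : ℕ) : PowerSeries K :=
  PowerSeries.C (R := K) ((-1 : K) ^ m * q ^ (k * m + m.choose 2) / poch (q ^ (k + 1)) m) *
    (PowerSeries.X ^ m * (pochX (k + 1) m)⁻¹)

/-- the summand of `G_k(x) = J_k(xq)/(1-xq^{k+1})` -/
def gT (k n : ℕ) : PowerSeries K :=
  PowerSeries.C (R := K) ((-1 : K) ^ n * q ^ ((k + 1) * n + n.choose 2) / poch (q ^ (k + 1)) n) *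
    (PowerSeries.X ^ n * (pochX (k + 1) (n + 1))⁻¹)

def JX (k : ℕ) : PowerSeries K := SumF (tT k)
def G (k : ℕ) : PowerSeries K := SumF (gT k)

lemma coeff_CXmulinv (a : K) (φ : PowerSeries K) (m N : ℕ) (h : N < m) :
    PowerSeries.coeff (R := K) N (PowerSeries.C (R := K) a * (PowerSeries.X ^ m * φ)) = 0 := by
  rw [mul_comm (PowerSeries.X ^ m) φ, PowerSeries.coeff_C_mul,
    PowerSeries.coeff_mul_X_pow', if_neg (by omega), mul_zero]

lemma coeff_CXmulinv' (a : K) (φ : PowerSeries K) (m N : ℕ) (h : m ≤ N) :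
    PowerSeries.coeff (R := K) N (PowerSeries.C (R := K) a * (PowerSeries.X ^ m * φ))
      = a * PowerSeries.coeff (R := K) (N - m) φ := by
  rw [mul_comm (PowerSeries.X ^ m) φ, PowerSeries.coeff_C_mul,
    PowerSeries.coeff_mul_X_pow', if_pos h]

lemma lowZero_tT (k : ℕ) : LowZero (tT k) :=
  fun m N h => coeff_CXmulinv _ _ m N h

lemma lowZero_gT (k : ℕ) : LowZero (gT k) :=
  fun m N h => coeff_CXmulinv _ _ m N h

lemma lowZero_mul (P : PowerSeries K) {F : ℕ → PowerSeries K} (hF : LowZero F) :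
    LowZero (fun m => P * F m) := by
  intro m N h
  rw [PowerSeries.coeff_mul]
  apply Finset.sum_eq_zero
  intro p hp
  have : p.2 ≤ N := Finset.HasAntidiagonal.antidiagonal.snd_le hp
  rw [hF m p.2 (by omega), mul_zero]

lemma tT_zero (k : ℕ) : tT k 0 = 1 := by
  rw [tT, pochX_zero, ps_inv_one]
  simp [poch_zero]

lemma gT_zero_head (k : ℕ) :
    (1 - PowerSeries.C (R := K) (q ^ (k + 1)) * PowerSeries.X) * gT k 0 = 1 := by
  rw [gT, pochX_one, poch_zero]
  norm_num

/-- termwise telescoping for `J_k` -/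
lemma tT_step (k m : ℕ) :
    (1 - PowerSeries.C (R := K) (q ^ (k + 1)) * PowerSeries.X) * tT k (m + 1)
      + PowerSeries.C (R := K) (q ^ k / (1 - q ^ (k + 1))) * PowerSeries.X * tT (k + 1) m = 0 := by
  have ha : (-1 : K) ^ (m + 1) * q ^ (k * (m + 1) + (m + 1).choose 2) / poch (q ^ (k + 1)) (m + 1)
      + q ^ k / (1 - q ^ (k + 1))
        * ((-1 : K) ^ m * q ^ ((k + 1) * m + m.choose 2) / poch (q ^ (k + 2)) m) = 0 := by
    have h1 : (1 : K) - q ^ (k + 1) ≠ 0 := one_sub_q_pow_ne k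
    have h2 : poch (q ^ (k + 2)) m ≠ 0 := poch_ne_zero (k + 1) m
    rw [poch_succ_front, choose_two_succ,
      show k * (m + 1) + (m.choose 2 + m) = (k + (k + 1) * m + m.choose 2) from by ring,
      show k + (k + 1) * m + m.choose 2 = ((k + 1) * m + m.choose 2) + k from by ring,
      pow_add]
    field_simp
    ring
  have hC : PowerSeries.C (R := K) ((-1:K)^(m+1) * q^(k*(m+1) + (m+1).choose 2) / poch (q^(k+1)) (m+1))
      + PowerSeries.C (R := K) (q ^ k / (1 - q ^ (k + 1)))
        * PowerSeries.C (R := K) ((-1:K)^m * q^((k+1)*m + m.choose 2) / poch (q^(k+2)) m) = 0 := by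
    rw [← map_mul, ← map_add, ha, map_zero]
  rw [tT, tT, pochX_succ_front (k + 1) m, PowerSeries.mul_inv_rev]
  have hu := one_sub_qX_mul_inv (k + 1)
  linear_combination
    (PowerSeries.C (R := K) ((-1:K)^(m+1) * q^(k*(m+1) + (m+1).choose 2) / poch (q^(k+1)) (m+1))
      * PowerSeries.X ^ (m + 1) * (pochX (k + 1 + 1) m)⁻¹) * hu
    + (PowerSeries.X ^ (m + 1) * (pochX (k + 1 + 1) m)⁻¹) * hC

/-- termwise telescoping for `G_k` -/
lemma gT_step (k n : ℕ) :
    (1 - PowerSeries.C (R := K) (q ^ (k + 1)) * PowerSeries.X) * gT k (n + 1)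
      + PowerSeries.C (R := K) (q ^ (k + 1) / (1 - q ^ (k + 1))) * PowerSeries.X * gT (k + 1) n = 0 := by
  have ha : (-1 : K) ^ (n + 1) * q ^ ((k + 1) * (n + 1) + (n + 1).choose 2)
        / poch (q ^ (k + 1)) (n + 1)
      + q ^ (k + 1) / (1 - q ^ (k + 1))
        * ((-1 : K) ^ n * q ^ ((k + 2) * n + n.choose 2) / poch (q ^ (k + 2)) n) = 0 := by
    have h1 : (1 : K) - q ^ (k + 1) ≠ 0 := one_sub_q_pow_ne k
    have h2 : poch (q ^ (k + 2)) n ≠ 0 := poch_ne_zero (k + 1) n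
    rw [poch_succ_front, choose_two_succ,
      show (k + 1) * (n + 1) + (n.choose 2 + n) = ((k + 2) * n + n.choose 2) + (k + 1) from by
        ring,
      pow_add]
    field_simp
    ring
  have hC : PowerSeries.C (R := K) ((-1:K)^(n+1) * q^((k+1)*(n+1) + (n+1).choose 2)
        / poch (q^(k+1)) (n+1))
      + PowerSeries.C (R := K) (q ^ (k + 1) / (1 - q ^ (k + 1)))
        * PowerSeries.C (R := K) ((-1:K)^n * q^((k+2)*n + n.choose 2) / poch (q^(k+2)) n) = 0 := by
    rw [← map_mul, ← map_add, ha, map_zero]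
  rw [gT, gT, pochX_succ_front (k + 1) (n + 1), PowerSeries.mul_inv_rev]
  have hu := one_sub_qX_mul_inv (k + 1)
  linear_combination
    (PowerSeries.C (R := K) ((-1:K)^(n+1) * q^((k+1)*(n+1) + (n+1).choose 2) / poch (q^(k+1)) (n+1))
      * PowerSeries.X ^ (n + 1) * (pochX (k + 1 + 1) (n + 1))⁻¹) * hu
    + (PowerSeries.X ^ (n + 1) * (pochX (k + 1 + 1) (n + 1))⁻¹) * hC

-- ## Part D : the two kernel identities and the candidate solution

lemma prop2 (k : ℕ) :
    (1 - PowerSeries.C (R := K) (q ^ (k + 1)) * PowerSeries.X) * JX k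
      + PowerSeries.C (R := K) (q ^ k / (1 - q ^ (k + 1))) * PowerSeries.X * JX (k + 1)
      = 1 - PowerSeries.C (R := K) (q ^ (k + 1)) * PowerSeries.X := by
  set u := 1 - PowerSeries.C (R := K) (q ^ (k + 1)) * PowerSeries.X with hu
  set c := PowerSeries.C (R := K) (q ^ k / (1 - q ^ (k + 1))) * PowerSeries.X with hc
  rw [JX, JX, SumF_mul_left u (tT k) (lowZero_tT k), SumF_mul_left c (tT (k + 1)) (lowZero_tT _)]
  rw [SumF_shift (fun m => u * tT k m) (lowZero_mul u (lowZero_tT k))]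
  rw [tT_zero, mul_one, add_assoc, ← SumF_add]
  have hz : SumF (fun m => u * tT k (m + 1) + c * tT (k + 1) m) = 0 := by
    rw [show (fun m => u * tT k (m + 1) + c * tT (k + 1) m) = fun _ => (0 : PowerSeries K) from
      funext fun m => tT_step k m, SumF_zero]
  rw [hz, add_zero]

lemma prop1 (k : ℕ) :
    (1 - PowerSeries.C (R := K) (q ^ (k + 1)) * PowerSeries.X) * G k
      + PowerSeries.C (R := K) (q ^ (k + 1) / (1 - q ^ (k + 1))) * PowerSeries.X * G (k + 1)
      = 1 := by
  set u := 1 - PowerSeries.C (R := K) (q ^ (k + 1)) * PowerSeries.X with hu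
  set c := PowerSeries.C (R := K) (q ^ (k + 1) / (1 - q ^ (k + 1))) * PowerSeries.X with hc
  rw [G, G, SumF_mul_left u (gT k) (lowZero_gT k), SumF_mul_left c (gT (k + 1)) (lowZero_gT _)]
  rw [SumF_shift (fun m => u * gT k m) (lowZero_mul u (lowZero_gT k))]
  rw [add_assoc, ← SumF_add]
  have hz : SumF (fun m => u * gT k (m + 1) + c * gT (k + 1) m) = 0 := by
    rw [show (fun m => u * gT k (m + 1) + c * gT (k + 1) m) = fun _ => (0 : PowerSeries K) from
      funext fun m => gT_step k m, SumF_zero]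
  rw [hz, add_zero, hu, gT_zero_head]

lemma constantCoeff_JX (k : ℕ) : constantCoeff (R := K) (JX k) = 1 := by
  rw [← PowerSeries.coeff_zero_eq_constantCoeff, JX, coeff_SumF]
  rw [Finset.sum_range_one, tT_zero]
  simp

lemma JX_mul_inv (k : ℕ) : JX k * (JX k)⁻¹ = 1 :=
  PowerSeries.mul_inv_cancel _ (by rw [constantCoeff_JX]; exact one_ne_zero)

/-- candidate for `A(1)` -/
def B0 : PowerSeries K := G 0 * (JX 0)⁻¹

/-- candidate for `A(q^k)` -/
def Ck (k : ℕ) : PowerSeries K :=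
  G k + PowerSeries.C (R := K) ((q ^ k)⁻¹) * ((1 - JX k) * B0)

lemma Ck_zero : Ck 0 = B0 := by
  have h0 := JX_mul_inv 0
  rw [Ck, pow_zero, inv_one, map_one, one_mul, B0]
  linear_combination (-(G 0)) * h0

lemma ck_star (k : ℕ) :
    (1 - PowerSeries.C (R := K) (q ^ (k + 1)) * PowerSeries.X) * Ck k
      = 1 + PowerSeries.C (R := K) ((1 - q ^ (k + 1))⁻¹) * PowerSeries.X * Ck 0
        - PowerSeries.C (R := K) (q ^ (k + 1) / (1 - q ^ (k + 1))) * PowerSeries.X * Ck (k + 1) := by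
  have P1 := prop1 k
  have P2 := prop2 k
  have hq0 : (q : K) ^ k ≠ 0 := pow_ne_zero k q_ne_zero
  have hq1 : (q : K) ^ (k + 1) ≠ 0 := pow_ne_zero _ q_ne_zero
  have hb : (1 : K) - q ^ (k + 1) ≠ 0 := one_sub_q_pow_ne k
  have hc12 : ((q : K) ^ k)⁻¹ * (q ^ k / (1 - q ^ (k + 1))) = (1 - q ^ (k + 1))⁻¹ := by
    field_simp
  have hc35 : (q : K) ^ (k + 1) / (1 - q ^ (k + 1)) * (q ^ (k + 1))⁻¹
      = (1 - q ^ (k + 1))⁻¹ := by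
    field_simp
  have hC12 : PowerSeries.C (R := K) ((q ^ k)⁻¹) * PowerSeries.C (R := K) (q ^ k / (1 - q ^ (k + 1)))
      = PowerSeries.C (R := K) ((1 - q ^ (k + 1))⁻¹) := by rw [← map_mul, hc12]
  have hC35 : PowerSeries.C (R := K) (q ^ (k + 1) / (1 - q ^ (k + 1)))
        * PowerSeries.C (R := K) ((q ^ (k + 1))⁻¹)
      = PowerSeries.C (R := K) ((1 - q ^ (k + 1))⁻¹) := by rw [← map_mul, hc35]
  rw [Ck_zero, Ck, Ck]
  linear_combination P1 - PowerSeries.C (R := K) ((q ^ k)⁻¹) * B0 * P2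
    + PowerSeries.X * JX (k + 1) * B0 * hC12
    + (PowerSeries.X * B0 - PowerSeries.X * JX (k + 1) * B0) * hC35

lemma ck_eq (k : ℕ) :
    Ck k = 1 + PowerSeries.X * Ck 0
      + PowerSeries.C (R := K) (q ^ (k + 1)) * PowerSeries.X * Ck k
      + PowerSeries.C (R := K) (q ^ (k + 1) / (1 - q ^ (k + 1))) * PowerSeries.X
          * (Ck 0 - Ck (k + 1)) := by
  have h := ck_star k
  have hb : (1 : K) - q ^ (k + 1) ≠ 0 := one_sub_q_pow_ne k
  have hK : ((1 : K) - q ^ (k + 1))⁻¹ = 1 + q ^ (k + 1) / (1 - q ^ (k + 1)) := by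
    field_simp
    ring
  have hC : PowerSeries.C (R := K) ((1 - q ^ (k + 1))⁻¹)
      = 1 + PowerSeries.C (R := K) (q ^ (k + 1) / (1 - q ^ (k + 1))) := by
    rw [hK, map_add, map_one]
  linear_combination h + PowerSeries.X * Ck 0 * hC

-- ## Part E : identification with the closed form

lemma JX_zero_eq_J : JX 0 = J := by
  ext N
  rw [JX, coeff_SumF, J, PowerSeries.coeff_mk]
  apply Finset.sum_congr rfl
  intro n hn
  have hnN : n ≤ N := by simpa using Nat.lt_succ_iff.mp (Finset.mem_range.mp hn)
  rw [tT, coeff_CXmulinv' _ _ n N hnN]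
  norm_num

lemma key_term (m : ℕ) :
    (1 - PowerSeries.C (R := K) (q ^ 1) * PowerSeries.X) * gT 0 m = rescale q (tT 0 m) := by
  have hre : rescale q (tT 0 m)
      = PowerSeries.C (R := K) ((-1 : K) ^ m * q ^ (0 * m + m.choose 2) / poch (q ^ (0 + 1)) m)
        * ((PowerSeries.C (R := K) q * PowerSeries.X) ^ m * (pochX 2 m)⁻¹) := by
    rw [tT, map_mul, rescale_C', map_mul, map_pow, rescale_X,
      rescale_inv q _ (by rw [constantCoeff_pochX]; exact one_ne_zero), rescale_pochX]
  rw [hre, mul_pow, ← map_pow]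
  have hpoch : pochX 1 (m + 1) = (1 - PowerSeries.C (R := K) (q ^ 1) * PowerSeries.X) * pochX 2 m := by
    rw [pochX_succ_front 1 m]
  rw [gT, hpoch, PowerSeries.mul_inv_rev]
  have hu := one_sub_qX_mul_inv 1
  have hab : (-1 : K) ^ m * q ^ ((0 + 1) * m + m.choose 2) / poch (q ^ (0 + 1)) m
      = (-1 : K) ^ m * q ^ (0 * m + m.choose 2) / poch (q ^ (0 + 1)) m * q ^ m := by
    rw [show (0 + 1) * m + m.choose 2 = (0 * m + m.choose 2) + m from by ring, pow_add]
    ring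
  have hC : PowerSeries.C (R := K) ((-1 : K) ^ m * q ^ ((0 + 1) * m + m.choose 2) / poch (q ^ (0+1)) m)
      = PowerSeries.C (R := K) ((-1 : K) ^ m * q ^ (0 * m + m.choose 2) / poch (q ^ (0 + 1)) m)
        * PowerSeries.C (R := K) (q ^ m) := by
    rw [← map_mul, hab]
  linear_combination
    (PowerSeries.C (R := K) ((-1 : K) ^ m * q ^ ((0 + 1) * m + m.choose 2) / poch (q ^ (0 + 1)) m)
      * PowerSeries.X ^ m * (pochX 2 m)⁻¹) * hu
    + (PowerSeries.X ^ m * (pochX 2 m)⁻¹) * hC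

lemma G0_eq : (1 - PowerSeries.C (R := K) (q ^ 1) * PowerSeries.X) * G 0 = rescale q (JX 0) := by
  rw [G, JX, SumF_mul_left _ _ (lowZero_gT 0), SumF_rescale]
  exact SumF_congr key_term

lemma closed_form :
    Ck 0 = (1 - PowerSeries.C (R := K) q * PowerSeries.X)⁻¹ * rescale q J * J⁻¹ := by
  have hkey : (1 - PowerSeries.C (R := K) q * PowerSeries.X) * G 0 = rescale q J := by
    have := G0_eq
    rwa [pow_one, JX_zero_eq_J] at this
  have hu : (1 - PowerSeries.C (R := K) q * PowerSeries.X)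
      * (1 - PowerSeries.C (R := K) q * PowerSeries.X)⁻¹ = 1 := by
    have := one_sub_qX_mul_inv 1
    rwa [pow_one] at this
  have hG : G 0 = (1 - PowerSeries.C (R := K) q * PowerSeries.X)⁻¹ * rescale q J := by
    rw [← hkey]
    linear_combination (-(G 0)) * hu
  rw [Ck_zero, B0, hG, JX_zero_eq_J]

-- ## Part F : evaluation of the functional equation at s = q^k

def XCq : Polynomial K := Polynomial.X * Polynomial.C q

lemma eval_XCq (c : K) : XCq.eval c = c * q := by
  rw [XCq, Polynomial.eval_mul, Polynomial.eval_X, Polynomial.eval_C]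

lemma halg : algebraMap (Polynomial K) S XCq = sS * qS := by
  unfold XCq sS qS
  rw [map_mul, RatFunc.algebraMap_X, RatFunc.algebraMap_C]

lemma XCq_ne_one : XCq ≠ 1 := by
  intro h
  have h3 := congrArg (Polynomial.eval 0) h
  simp [XCq] at h3

lemma sq_ne_one : (sS * qS : S) ≠ 1 := by
  rw [← halg]
  intro h
  rw [show (1 : S) = algebraMap (Polynomial K) S 1 from (map_one _).symm] at h
  exact XCq_ne_one (RatFunc.algebraMap_injective K h)

lemma one_sub_sq_ne : (1 : S) - sS * qS ≠ 0 :=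
  sub_ne_zero.mpr (Ne.symm sq_ne_one)

lemma eval_alg (c : K) (p : Polynomial K) :
    RatFunc.eval (RingHom.id K) c (algebraMap (Polynomial K) S p) = p.eval c := by
  rw [RatFunc.eval_algebraMap]
  rw [show algebraMap (Polynomial K) (Polynomial K) p = p from rfl]
  rfl

lemma eq_num (f : S) (h : f.denom = 1) : f = algebraMap (Polynomial K) S f.num := by
  conv_lhs => rw [← RatFunc.num_div_denom f]
  rw [h, map_one, div_one]

lemma coeff_CXmulS (a : S) (φ : PowerSeries S) (N : ℕ) :
    PowerSeries.coeff (R := S) (N + 1) (PowerSeries.C (R := S) a * PowerSeries.X * φ)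
      = a * PowerSeries.coeff (R := S) N φ := by
  rw [mul_assoc, PowerSeries.coeff_C_mul, PowerSeries.coeff_succ_X_mul]

lemma coeff_CXmulK (a : K) (φ : PowerSeries K) (N : ℕ) :
    PowerSeries.coeff (R := K) (N + 1) (PowerSeries.C (R := K) a * PowerSeries.X * φ)
      = a * PowerSeries.coeff (R := K) N φ := by
  rw [mul_assoc, PowerSeries.coeff_C_mul, PowerSeries.coeff_succ_X_mul]

section Main

variable (A : PowerSeries S)

/-- numerator of the `N`-th coefficient -/
def pA (N : ℕ) : Polynomial K := (PowerSeries.coeff (R := S) N A).num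

/-- its composition with `s ↦ q s` -/
def pSq (N : ℕ) : Polynomial K := (pA A N).comp (Polynomial.C (q ^ 1) * Polynomial.X)

lemma coeffA_eq (hpoly : PolyCoeffs A) (N : ℕ) : PowerSeries.coeff (R := S) N A = algebraMap _ S (pA A N) :=
  eq_num _ (hpoly N)

lemma coeff_atSq (hpoly : PolyCoeffs A) (N : ℕ) :
    PowerSeries.coeff (R := S) N (atSq 1 A) = algebraMap (Polynomial K) S (pSq A N) := by
  rw [atSq, PowerSeries.coeff_mk, coeffA_eq A hpoly N, RatFunc.eval_algebraMap]
  rw [show algebraMap (Polynomial K) (Polynomial K) (pA A N) = pA A N from rfl]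
  have h1 : (algebraMap (Polynomial K) S).comp (Polynomial.C : K →+* Polynomial K)
      = (RatFunc.C : K →+* S) := RingHom.ext fun a => RatFunc.algebraMap_C a
  have h2 : algebraMap (Polynomial K) S (Polynomial.C (q ^ 1) * Polynomial.X)
      = RatFunc.C (q ^ 1) * RatFunc.X := by
    rw [map_mul, RatFunc.algebraMap_C, RatFunc.algebraMap_X]
  rw [pSq, Polynomial.comp, Polynomial.hom_eval₂, h1, h2]

lemma poly_id (hpoly : PolyCoeffs A) (hA : A = 1 + PowerSeries.X * atOne A
        + PowerSeries.C (R := S) (sS * qS) * PowerSeries.X * A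
        + PowerSeries.C (R := S) (sS * qS / (1 - sS * qS)) * PowerSeries.X * (atOne A - atSq 1 A))
    (N : ℕ) :
    pA A (N + 1) * (1 - XCq)
      = (Polynomial.C (ev1 (PowerSeries.coeff (R := S) N A)) + XCq * pA A N) * (1 - XCq)
        + XCq * (Polynomial.C (ev1 (PowerSeries.coeff (R := S) N A)) - pSq A N) := by
  have hAc := congrArg (PowerSeries.coeff (R := S) (N + 1)) hA
  rw [map_add, map_add, map_add, coeff_CXmulS, coeff_CXmulS,
    PowerSeries.coeff_succ_X_mul, PowerSeries.coeff_one, if_neg (Nat.succ_ne_zero N),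
    map_sub, atOne, PowerSeries.coeff_mk] at hAc
  -- hAc : coeff (N+1) A = 0 + RatFunc.C (ev1 aN) + sq * aN + c2 * (RatFunc.C (ev1 aN) - w)
  apply RatFunc.algebraMap_injective K
  simp only [map_mul, map_add, map_sub, map_one]
  rw [halg, RatFunc.algebraMap_C, ← coeffA_eq A hpoly, ← coeffA_eq A hpoly,
    ← coeff_atSq A hpoly N]
  have hf : (sS * qS) / (1 - sS * qS) * (1 - sS * qS) = sS * qS :=
    div_mul_cancel₀ _ one_sub_sq_ne
  linear_combination (1 - sS * qS) * hAc
    + (RatFunc.C (ev1 (PowerSeries.coeff (R := S) N A)) - PowerSeries.coeff (R := S) N (atSq 1 A)) * hf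

lemma ev1_eq (hpoly : PolyCoeffs A) (N : ℕ) : ev1 (PowerSeries.coeff (R := S) N A) = (pA A N).eval 1 := by
  rw [ev1, coeffA_eq A hpoly N, eval_alg]

lemma bk_rec (hpoly : PolyCoeffs A) (hA : A = 1 + PowerSeries.X * atOne A
        + PowerSeries.C (R := S) (sS * qS) * PowerSeries.X * A
        + PowerSeries.C (R := S) (sS * qS / (1 - sS * qS)) * PowerSeries.X * (atOne A - atSq 1 A))
    (k N : ℕ) :
    (pA A (N + 1)).eval (q ^ k) * (1 - q ^ (k + 1))
      = ((pA A N).eval 1 + q ^ (k + 1) * (pA A N).eval (q ^ k)) * (1 - q ^ (k + 1))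
        + q ^ (k + 1) * ((pA A N).eval 1 - (pA A N).eval (q ^ (k + 1))) := by
  have h := congrArg (Polynomial.eval ((q : K) ^ k)) (poly_id A hpoly hA N)
  simp only [Polynomial.eval_mul, Polynomial.eval_add, Polynomial.eval_sub, Polynomial.eval_one,
    Polynomial.eval_C, eval_XCq, pSq, Polynomial.eval_comp, Polynomial.eval_X] at h
  rw [show (q : K) ^ 1 * q ^ k = q ^ (k + 1) from by ring] at h
  rw [ev1_eq A hpoly N] at h
  linear_combination h

lemma bk_init (h0 : PowerSeries.coeff (R := S) 0 A = 1) (k : ℕ) : (pA A 0).eval (q ^ k) = 1 := by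
  rw [pA, h0, RatFunc.num_one, Polynomial.eval_one]

end Main

-- ## Part G : coefficient recurrences for the candidate, and conclusion

lemma ck_init (k : ℕ) : PowerSeries.coeff (R := K) 0 (Ck k) = 1 := by
  have h := congrArg (PowerSeries.coeff (R := K) 0) (ck_eq k)
  simpa using h

lemma ck_rec (k N : ℕ) :
    PowerSeries.coeff (R := K) (N + 1) (Ck k)
      = PowerSeries.coeff (R := K) N (Ck 0) + q ^ (k + 1) * PowerSeries.coeff (R := K) N (Ck k)
        + q ^ (k + 1) / (1 - q ^ (k + 1))
            * (PowerSeries.coeff (R := K) N (Ck 0) - PowerSeries.coeff (R := K) N (Ck (k + 1))) := by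
  have h := congrArg (PowerSeries.coeff (R := K) (N + 1)) (ck_eq k)
  rw [map_add, map_add, map_add, coeff_CXmulK, coeff_CXmulK,
    PowerSeries.coeff_succ_X_mul, PowerSeries.coeff_one, if_neg (Nat.succ_ne_zero N),
    map_sub] at h
  linear_combination h


/-- If `A(s)` (a power series in `x` with coefficients polynomial in `s` and `q`) satisfies
`A(s) = 1 + x·A(1) + xsq·A(s) + (xsq/(1-sq))·(A(1) - A(sq))`,
then `A(1) = (1/(1-xq)) · J(xq)/J(x)`. -/
theorem stmt14 (A : PowerSeries S) (hpoly : PolyCoeffs A)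
    (hA : A = 1 + PowerSeries.X * atOne A
        + PowerSeries.C (R := S) (sS * qS) * PowerSeries.X * A
        + PowerSeries.C (R := S) (sS * qS / (1 - sS * qS)) * PowerSeries.X * (atOne A - atSq 1 A)) :
    atOneK A = (1 - PowerSeries.C (R := K) q * PowerSeries.X)⁻¹ * rescale q J * J⁻¹ := by
  have h0 : PowerSeries.coeff (R := S) 0 A = 1 := by
    have h := congrArg (PowerSeries.constantCoeff (R := S)) hA
    rw [PowerSeries.coeff_zero_eq_constantCoeff]
    simpa using h
  have main : ∀ N k, (pA A N).eval (q ^ k) = PowerSeries.coeff (R := K) N (Ck k) := by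
    intro N
    induction N with
    | zero => intro k; rw [bk_init A h0 k, ck_init k]
    | succ N IH =>
      intro k
      have hbne : (1 : K) - q ^ (k + 1) ≠ 0 := one_sub_q_pow_ne k
      apply mul_right_cancel₀ hbne
      have hb := bk_rec A hpoly hA k N
      have h1 : (pA A N).eval 1 = PowerSeries.coeff (R := K) N (Ck 0) := by
        have h := IH 0
        rwa [pow_zero] at h
      rw [hb, h1, IH k, IH (k + 1)]
      have hc := ck_rec k N
      have hdiv : q ^ (k + 1) / (1 - q ^ (k + 1)) * (1 - q ^ (k + 1)) = q ^ (k + 1) :=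
        div_mul_cancel₀ _ hbne
      linear_combination (-(1 - q ^ (k + 1))) * hc
        - (PowerSeries.coeff (R := K) N (Ck 0) - PowerSeries.coeff (R := K) N (Ck (k + 1))) * hdiv
  have hext : atOneK A = Ck 0 := by
    ext N
    have hm := main N 0
    rw [pow_zero] at hm
    rw [atOneK, PowerSeries.coeff_mk, ev1_eq A hpoly N, hm]
  rw [hext, closed_form]

end FC
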